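/- Let k be a perfect field of characteristic p > 0 and let R̂ = W(k)[[z₁,…,z_d]] with the Frobenius lift Φ sending z_l to z_l^p and acting as σ on W(k). Let M be a free W(k)-module of finite rank and let Φ⁰ be a Φ-linear endomorphism of M ⊗_{W(k)} R̂ which induces an isomorphism after inverting p. Then there is at most one connection ∇ on M ⊗ R̂ (with values in the p-adically completed module of differentials) such that Φ⁰ is horizontal, i.e., ∇ ∘ Φ⁰ = (Φ⁰ ⊗ dΦ) ∘ ∇. -/

import Mathlib

/-- The formal partial derivative `∂/∂z_l` on multivariate power series. -/
noncomputable def mvPowerSeriesPDeriv {d : ℕ} {A : Type*} [CommRing A] (l : Fin d)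
    (f : MvPowerSeries (Fin d) A) : MvPowerSeries (Fin d) A :=
  fun m => (m l + 1) • MvPowerSeries.coeff (m + Finsupp.single l 1) f

/-- Over `R̂ = W(k)[[z₁,…,z_d]]` with the Frobenius lift `Φ` (sending `z_l ↦ z_l^p` and acting
as `σ` on `W(k)`), let `Φ⁰` be a `Φ`-linear endomorphism of a free module `R̂^r` which induces
an isomorphism after inverting `p` (encoded by a matrix `Amat` invertible up to a power of
`p`, via `Φ⁰(v) = Amat · Φ(v)`).  Then there is at most one connection
`∇ = (D_1, …, D_d)` for which `Φ⁰` is horizontal, i.e. `D_l (Φ⁰ v) = p z_l^{p-1} Φ⁰(D_l v)`. -/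
theorem connection_unique_complete_local
    (p : ℕ) (hp : p.Prime) [Fact p.Prime]
    (k : Type*) [Field k] [CharP k p] [PerfectRing k p]
    (d r : ℕ)
    (Φ : MvPowerSeries (Fin d) (WittVector p k) →+* MvPowerSeries (Fin d) (WittVector p k))
    (hΦX : ∀ l, Φ (MvPowerSeries.X l) = (MvPowerSeries.X l) ^ p)
    (hΦC : ∀ a : WittVector p k,
      Φ (MvPowerSeries.C a : MvPowerSeries (Fin d) (WittVector p k)) =
        (MvPowerSeries.C (WittVector.frobenius a) : MvPowerSeries (Fin d) (WittVector p k)))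
    (Amat : Matrix (Fin r) (Fin r) (MvPowerSeries (Fin d) (WittVector p k)))
    (hAmat : ∃ (s : ℕ) (Bmat : Matrix (Fin r) (Fin r) (MvPowerSeries (Fin d) (WittVector p k))),
      Amat * Bmat = (p : MvPowerSeries (Fin d) (WittVector p k)) ^ s • 1 ∧
      Bmat * Amat = (p : MvPowerSeries (Fin d) (WittVector p k)) ^ s • 1)
    (D D' : Fin d → (Fin r → MvPowerSeries (Fin d) (WittVector p k)) →
      (Fin r → MvPowerSeries (Fin d) (WittVector p k)))
    (haddD : ∀ l v w, D l (v + w) = D l v + D l w)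
    (haddD' : ∀ l v w, D' l (v + w) = D' l v + D' l w)
    (hLeibD : ∀ l (f : MvPowerSeries (Fin d) (WittVector p k)) v,
      D l (f • v) = f • D l v + (mvPowerSeriesPDeriv l f) • v)
    (hLeibD' : ∀ l (f : MvPowerSeries (Fin d) (WittVector p k)) v,
      D' l (f • v) = f • D' l v + (mvPowerSeriesPDeriv l f) • v)
    (hhorD : ∀ l v, D l (Amat.mulVec fun i => Φ (v i)) =
      ((p : MvPowerSeries (Fin d) (WittVector p k)) * (MvPowerSeries.X l) ^ (p - 1)) •
        (Amat.mulVec fun i => Φ (D l v i)))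
    (hhorD' : ∀ l v, D' l (Amat.mulVec fun i => Φ (v i)) =
      ((p : MvPowerSeries (Fin d) (WittVector p k)) * (MvPowerSeries.X l) ^ (p - 1)) •
        (Amat.mulVec fun i => Φ (D' l v i))) :
    D = D' := by
  classical
  obtain ⟨s, B, hAB, hBA⟩ := hAmat
  funext l v
  rw [← sub_eq_zero]
  -- The difference of the two connections, as a linear map.
  let E : (Fin r → MvPowerSeries (Fin d) (WittVector p k)) →ₗ[MvPowerSeries (Fin d) (WittVector p k)]
      (Fin r → MvPowerSeries (Fin d) (WittVector p k)) :=
    { toFun := fun u => D l u - D' l u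
      map_add' := fun u1 u2 => by
        show D l (u1 + u2) - D' l (u1 + u2) = _
        rw [haddD l, haddD' l]; abel
      map_smul' := fun f u => by
        show D l (f • u) - D' l (f • u) = _
        simp only [RingHom.id_apply]
        rw [hLeibD l, hLeibD' l, smul_sub]; abel }
  have hEdef : ∀ u, E u = D l u - D' l u := fun _ => rfl
  show E v = 0
  -- the matrix of E
  set C : Matrix (Fin r) (Fin r) (MvPowerSeries (Fin d) (WittVector p k)) :=
    Matrix.of fun i j => E (Pi.single j 1) i with hC
  have hdecomp : ∀ u : Fin r → MvPowerSeries (Fin d) (WittVector p k),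
      u = ∑ j, u j • (Pi.single j 1 : Fin r → MvPowerSeries (Fin d) (WittVector p k)) := by
    intro u; funext i
    simp [Finset.sum_apply, Pi.single_apply]
  have hEC : ∀ u, E u = C.mulVec u := by
    intro u
    conv_lhs => rw [hdecomp u]
    rw [map_sum]
    funext i
    simp only [Finset.sum_apply, map_smul, Pi.smul_apply, smul_eq_mul, Matrix.mulVec,
      dotProduct]
    exact Finset.sum_congr rfl fun j _ => mul_comm _ _
  -- horizontality for E
  have hhorE : ∀ u, E (Amat.mulVec fun i => Φ (u i)) =
      ((p : MvPowerSeries (Fin d) (WittVector p k)) * (MvPowerSeries.X l) ^ (p - 1)) •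
        (Amat.mulVec fun i => Φ (E u i)) := by
    intro u
    rw [hEdef, hhorD, hhorD', ← smul_sub, ← Matrix.mulVec_sub]
    have : ((fun i => Φ (D l u i)) - fun i => Φ (D' l u i)) = fun i => Φ (E u i) := by
      funext i
      simp only [Pi.sub_apply, ← map_sub]
      rfl
    rw [this]
  -- the matrix relation  C * A = w • (A * C.map Φ)
  have hmatrel : C * Amat =
      ((p : MvPowerSeries (Fin d) (WittVector p k)) * (MvPowerSeries.X l) ^ (p - 1)) •
        (Amat * C.map Φ) := by
    ext i j : 1
    have h := congrFun (hhorE (Pi.single j 1)) i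
    have h1 : (fun i' => Φ ((Pi.single j 1 : Fin r → MvPowerSeries (Fin d) (WittVector p k)) i')) =
        (Pi.single j 1 : Fin r → MvPowerSeries (Fin d) (WittVector p k)) := by
      funext i'
      rcases eq_or_ne i' j with rfl | hne
      · simp
      · simp [Pi.single_apply, hne]
    rw [h1] at h
    rw [hEC] at h
    simpa [Matrix.mul_apply, Matrix.mulVec, dotProduct, Matrix.smul_apply, smul_eq_mul,
      Matrix.map_apply, Finset.mul_sum, hC, Pi.single_apply, mul_ite, ite_mul, mul_one, mul_zero,
      Finset.sum_ite_eq] using h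
  have key : (p : MvPowerSeries (Fin d) (WittVector p k)) ^ s • C =
      ((p : MvPowerSeries (Fin d) (WittVector p k)) * (MvPowerSeries.X l) ^ (p - 1)) •
        (Amat * C.map Φ * B) := by
    calc (p : MvPowerSeries (Fin d) (WittVector p k)) ^ s • C
        = C * ((p : MvPowerSeries (Fin d) (WittVector p k)) ^ s • 1) := by
          rw [Matrix.mul_smul, mul_one]
      _ = C * Amat * B := by rw [← hAB, ← mul_assoc]
      _ = (((p : MvPowerSeries (Fin d) (WittVector p k)) * (MvPowerSeries.X l) ^ (p - 1)) •
            (Amat * C.map Φ)) * B := by rw [hmatrel]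
      _ = ((p : MvPowerSeries (Fin d) (WittVector p k)) * (MvPowerSeries.X l) ^ (p - 1)) •
            (Amat * C.map Φ * B) := by rw [Matrix.smul_mul]
  have hmapsmul : ∀ (a : MvPowerSeries (Fin d) (WittVector p k))
      (M : Matrix (Fin r) (Fin r) (MvPowerSeries (Fin d) (WittVector p k))),
      (a • M).map Φ = Φ a • M.map Φ := by
    intro a M; ext i j
    simp [Matrix.map_apply, Matrix.smul_apply, smul_eq_mul, map_mul]
  have hΦp : Φ (p : MvPowerSeries (Fin d) (WittVector p k)) =
      (p : MvPowerSeries (Fin d) (WittVector p k)) := map_natCast Φ p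
  have hΦXpow : ∀ e : ℕ, Φ ((MvPowerSeries.X l : MvPowerSeries (Fin d) (WittVector p k)) ^ e) =
      (MvPowerSeries.X l) ^ (p * e) := by
    intro e; rw [map_pow, hΦX, ← pow_mul]
  -- the main induction
  have main : ∀ n : ℕ, ∃ G : Matrix (Fin r) (Fin r) (MvPowerSeries (Fin d) (WittVector p k)),
      (p : MvPowerSeries (Fin d) (WittVector p k)) ^ (n * s) • C =
      ((MvPowerSeries.X l : MvPowerSeries (Fin d) (WittVector p k)) ^ (p ^ n - 1)) • G := by
    intro n
    induction n with
    | zero => exact ⟨C, by simp⟩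
    | succ n ih =>
      obtain ⟨G, hG⟩ := ih
      refine ⟨(p : MvPowerSeries (Fin d) (WittVector p k)) • (Amat * G.map Φ * B), ?_⟩
      have hpn : 1 ≤ p ^ n := Nat.one_le_pow _ _ hp.pos
      have hexp : (p - 1) + p * (p ^ n - 1) = p ^ (n + 1) - 1 := by
        have h1 : p * (p ^ n - 1) = p * p ^ n - p := by
          rw [Nat.mul_sub, mul_one]
        have h2 : p ≤ p * p ^ n := by
          calc p = p * 1 := (mul_one p).symm
            _ ≤ p * p ^ n := Nat.mul_le_mul_left p hpn
        have h3 : p ^ (n + 1) = p * p ^ n := by rw [pow_succ, mul_comm]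
        have h4 := hp.two_le
        rw [h3, h1]
        generalize hq : p * p ^ n = q
        rw [hq] at h2
        omega
      have hns : (n + 1) * s = n * s + s := by ring
      calc (p : MvPowerSeries (Fin d) (WittVector p k)) ^ ((n + 1) * s) • C
          = (p : MvPowerSeries (Fin d) (WittVector p k)) ^ (n * s) •
              ((p : MvPowerSeries (Fin d) (WittVector p k)) ^ s • C) := by
            rw [smul_smul, ← pow_add, hns]
        _ = (p : MvPowerSeries (Fin d) (WittVector p k)) ^ (n * s) •
              (((p : MvPowerSeries (Fin d) (WittVector p k)) * (MvPowerSeries.X l) ^ (p - 1)) •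
                (Amat * C.map Φ * B)) := by rw [key]
        _ = ((p : MvPowerSeries (Fin d) (WittVector p k)) * (MvPowerSeries.X l) ^ (p - 1)) •
              (Amat * ((p : MvPowerSeries (Fin d) (WittVector p k)) ^ (n * s) • C.map Φ) * B) := by
            rw [Matrix.mul_smul, Matrix.smul_mul, smul_comm]
        _ = ((p : MvPowerSeries (Fin d) (WittVector p k)) * (MvPowerSeries.X l) ^ (p - 1)) •
              (Amat * (((p : MvPowerSeries (Fin d) (WittVector p k)) ^ (n * s) • C).map Φ) * B) := by
            rw [hmapsmul, map_pow, hΦp]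
        _ = ((p : MvPowerSeries (Fin d) (WittVector p k)) * (MvPowerSeries.X l) ^ (p - 1)) •
              (Amat * ((((MvPowerSeries.X l : MvPowerSeries (Fin d) (WittVector p k)) ^ (p ^ n - 1)) • G).map Φ) * B) := by
            rw [hG]
        _ = ((p : MvPowerSeries (Fin d) (WittVector p k)) * (MvPowerSeries.X l) ^ (p - 1)) •
              (Amat * (((MvPowerSeries.X l : MvPowerSeries (Fin d) (WittVector p k)) ^ (p * (p ^ n - 1))) • G.map Φ) * B) := by
            rw [hmapsmul, hΦXpow]
        _ = (((p : MvPowerSeries (Fin d) (WittVector p k)) * (MvPowerSeries.X l) ^ (p - 1)) *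
              (MvPowerSeries.X l) ^ (p * (p ^ n - 1))) • (Amat * G.map Φ * B) := by
            rw [Matrix.mul_smul, Matrix.smul_mul, smul_smul]
        _ = ((MvPowerSeries.X l : MvPowerSeries (Fin d) (WittVector p k)) ^ (p ^ (n + 1) - 1)) •
              ((p : MvPowerSeries (Fin d) (WittVector p k)) • (Amat * G.map Φ * B)) := by
            rw [smul_smul]
            congr 1
            rw [mul_assoc, ← pow_add, hexp, mul_comm]
  -- conclude C = 0
  have hCzero : C = 0 := by
    ext i j : 1
    rw [Matrix.zero_apply]
    apply MvPowerSeries.ext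
    intro m
    obtain ⟨G, hG⟩ := main (m l + 1)
    have hml : m l < p ^ (m l + 1) - 1 := by
      have := Nat.lt_pow_self (n := m l + 1) hp.one_lt
      omega
    have h := congrArg (fun M : Matrix (Fin r) (Fin r) (MvPowerSeries (Fin d) (WittVector p k)) =>
      MvPowerSeries.coeff m (M i j)) hG
    simp only [Matrix.smul_apply, smul_eq_mul] at h
    have hr : MvPowerSeries.coeff m
        ((MvPowerSeries.X l : MvPowerSeries (Fin d) (WittVector p k)) ^ (p ^ (m l + 1) - 1) * G i j)
        = 0 := by
      rw [MvPowerSeries.coeff_mul]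
      apply Finset.sum_eq_zero
      intro q hq
      rw [Finset.HasAntidiagonal.mem_antidiagonal] at hq
      rw [MvPowerSeries.coeff_X_pow]
      split_ifs with hsing
      · exfalso
        have hal : q.1 l ≤ m l := by
          rw [← hq, Finsupp.add_apply]
          exact le_self_add
        rw [hsing, Finsupp.single_eq_same] at hal
        omega
      · exact zero_mul _
    have hcast : ((p : MvPowerSeries (Fin d) (WittVector p k))) ^ ((m l + 1) * s)
        = MvPowerSeries.C ((p : WittVector p k) ^ ((m l + 1) * s)) := by
      rw [map_pow, map_natCast]
    rw [hcast, MvPowerSeries.coeff_C_mul, hr] at h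
    have hpne : ((p : WittVector p k)) ^ ((m l + 1) * s) ≠ 0 :=
      pow_ne_zero _ (WittVector.p_nonzero p k)
    have := (mul_eq_zero.mp h).resolve_left hpne
    simpa using this
  rw [hEC v, hCzero, Matrix.zero_mulVec]
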